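/- Let n ≥ 2 and let a_1, …, a_n be pairwise distinct positive integers with gcd(a_1, …, a_n) = 1, and for each j set g_j = gcd{a_k : k ≠ j}. Then the rational number γ_2 := −(1/12) Σ_{i=1}^n ( a_i^{2n−5} / ∏_{j ≠ i} (a_i² − a_j²) ) · ( Σ_{j ≠ i} a_j² ) + (1/12) Σ_{j=1}^n Σ_{i ≠ j} a_i^{2n−5} (g_j² − 1) / ∏_{k ≠ i, j} (a_i² − a_k²) is strictly positive, and likewise γ_0 := Σ_{i=1}^n a_i^{2n−3}/∏_{j≠i}(a_i² − a_j²) is strictly positive. (Here a_i^{2n−5} denotes the integer power of a_i taken in ℚ, equal to 1/a_i when n = 2.) -/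

import Mathlib

open Finset Real MeasureTheory Set Filter Polynomial Topology

section Aux
variable {ι : Type*} [DecidableEq ι]

lemma hasDeriv_aux (a : ℝ) (ha : 0 < a) (u : ℝ) :
    HasDerivAt (fun u : ℝ => a⁻¹ * Real.arctan (u / a)) ((u ^ 2 + a ^ 2)⁻¹) u := by
  have h1 : HasDerivAt (fun u : ℝ => u / a) a⁻¹ u := by
    simpa [one_div] using (hasDerivAt_id u).div_const a
  have h2 := (Real.hasDerivAt_arctan (u / a)).comp u h1
  have h3 := h2.const_mul a⁻¹
  refine h3.congr_deriv ?_
  have ha' : a ≠ 0 := ha.ne'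
  field_simp
  ring

lemma tendsto_aux (a : ℝ) (ha : 0 < a) :
    Tendsto (fun u : ℝ => a⁻¹ * Real.arctan (u / a)) atTop (𝓝 (a⁻¹ * (π / 2))) := by
  have h : Tendsto (fun u : ℝ => u / a) atTop atTop := tendsto_id.atTop_div_const ha
  exact ((tendsto_nhds_of_tendsto_nhdsWithin Real.tendsto_arctan_atTop).comp h).const_mul _

lemma integrableOn_aux (a : ℝ) (ha : 0 < a) :
    IntegrableOn (fun u : ℝ => (u ^ 2 + a ^ 2)⁻¹) (Ioi (0:ℝ)) :=
  integrableOn_Ioi_deriv_of_nonneg' (fun x _ => hasDeriv_aux a ha x)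
    (fun x _ => by positivity) (tendsto_aux a ha)

lemma integral_aux (a : ℝ) (ha : 0 < a) :
    ∫ u in Ioi (0:ℝ), (u ^ 2 + a ^ 2)⁻¹ = π / (2 * a) := by
  have h := integral_Ioi_of_hasDerivAt_of_nonneg' (a := 0) (fun x _ => hasDeriv_aux a ha x)
    (fun x _ => by positivity) (tendsto_aux a ha)
  rw [h]
  rw [zero_div, Real.arctan_zero, mul_zero, sub_zero, inv_mul_eq_div, div_div]

lemma lagrange_sum (s : Finset ι) (x : ι → ℝ) (hinj : Set.InjOn x s)
    (p : ℕ) (hp : p < s.card) (y : ℝ) :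
    ∑ i ∈ s, (x i) ^ p * ∏ j ∈ s.erase i, ((x i - x j)⁻¹ * (y - x j)) = y ^ p := by
  have hdeg : ((X : ℝ[X]) ^ p).degree < s.card := by
    rw [Polynomial.degree_X_pow]
    exact_mod_cast hp
  have h := Lagrange.eq_interpolate (v := x) hinj hdeg
  have h2 := congrArg (Polynomial.eval y) h
  simp only [Lagrange.interpolate_apply, Lagrange.basis, Lagrange.basisDivisor,
    Polynomial.eval_finset_sum, Polynomial.eval_prod, Polynomial.eval_mul, Polynomial.eval_C,
    Polynomial.eval_sub, Polynomial.eval_X, Polynomial.eval_pow] at h2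
  exact h2.symm

lemma key_identity (s : Finset ι) (x : ι → ℝ) (hx : ∀ i ∈ s, 0 < x i)
    (hinj : Set.InjOn x s) (p : ℕ) (hp : p < s.card) (u : ℝ) :
    ∑ i ∈ s, (x i) ^ p / (∏ j ∈ s.erase i, (x i - x j)) * (u ^ 2 + x i)⁻¹
      = (-1) ^ (s.card - 1 - p) * (u ^ 2) ^ p / ∏ i ∈ s, (u ^ 2 + x i) := by
  have hpos : ∀ i ∈ s, 0 < u ^ 2 + x i := fun i hi => by
    have := hx i hi; positivity
  have hne : (∏ i ∈ s, (u ^ 2 + x i)) ≠ 0 :=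
    Finset.prod_ne_zero_iff.mpr fun i hi => (hpos i hi).ne'
  rw [eq_div_iff hne, Finset.sum_mul]
  have hsign : ∀ i ∈ s,
      (x i) ^ p / (∏ j ∈ s.erase i, (x i - x j)) * (u ^ 2 + x i)⁻¹ * ∏ k ∈ s, (u ^ 2 + x k)
        = (-1) ^ (s.card - 1) *
          ((x i) ^ p * ∏ j ∈ s.erase i, ((x i - x j)⁻¹ * (-(u ^ 2) - x j))) := by
    intro i hi
    have h1 : ∏ j ∈ s.erase i, ((x i - x j)⁻¹ * (-(u ^ 2) - x j))
        = (∏ j ∈ s.erase i, (x i - x j))⁻¹ *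
          ((-1) ^ (s.card - 1) * ∏ j ∈ s.erase i, (u ^ 2 + x j)) := by
      have : ∀ j ∈ s.erase i, (x i - x j)⁻¹ * (-(u ^ 2) - x j)
          = (x i - x j)⁻¹ * ((-1) * (u ^ 2 + x j)) := fun j _ => by ring
      rw [Finset.prod_congr rfl this, Finset.prod_mul_distrib, Finset.prod_mul_distrib,
        Finset.prod_const, Finset.prod_inv_distrib, Finset.card_erase_of_mem hi]
    rw [h1, ← Finset.mul_prod_erase s _ hi, div_eq_mul_inv]
    have h2 : ((-1 : ℝ) ^ (s.card - 1)) * ((-1) ^ (s.card - 1)) = 1 := by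
      rw [← mul_pow]; norm_num
    have h3 : (u ^ 2 + x i)⁻¹ * ((u ^ 2 + x i) * ∏ j ∈ s.erase i, (u ^ 2 + x j))
        = ∏ j ∈ s.erase i, (u ^ 2 + x j) := inv_mul_cancel_left₀ (hpos i hi).ne' _
    rw [mul_assoc, h3]
    linear_combination (-(x i ^ p * (∏ j ∈ s.erase i, (x i - x j))⁻¹ *
      ∏ j ∈ s.erase i, (u ^ 2 + x j))) * h2
  rw [Finset.sum_congr rfl hsign, ← Finset.mul_sum, lagrange_sum s x hinj p hp (-(u ^ 2))]
  have hps : s.card - 1 - p + p = s.card - 1 := by omega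
  have hsplit : ((-1 : ℝ)) ^ (s.card - 1) = (-1) ^ (s.card - 1 - p) * (-1) ^ p := by
    rw [← pow_add, hps]
  have h2 : ((-1 : ℝ) ^ p) * ((-1) ^ p) = 1 := by rw [← mul_pow]; norm_num
  rw [hsplit, neg_pow]
  linear_combination ((-1 : ℝ) ^ (s.card - 1 - p) * (u ^ 2) ^ p) * h2

lemma key_sign (s : Finset ι) (a : ι → ℝ) (ha : ∀ i ∈ s, 0 < a i)
    (hinj : Set.InjOn a s) (p : ℕ) (hp : p < s.card) :
    0 < (-1) ^ (s.card - 1 - p) *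
      ∑ i ∈ s, (a i) ^ (2 * p) / (a i * ∏ j ∈ s.erase i, ((a i) ^ 2 - (a j) ^ 2)) := by
  classical
  set x : ι → ℝ := fun i => (a i) ^ 2 with hxdef
  have hxpos : ∀ i ∈ s, 0 < x i := fun i hi => pow_pos (ha i hi) 2
  have hxinj : Set.InjOn x s := by
    intro i hi j hj hij
    have h2 : (a i - a j) * (a i + a j) = 0 := by linear_combination hij
    rcases mul_eq_zero.mp h2 with h3 | h3
    · exact hinj hi hj (by linarith)
    · exact ((by linarith [ha i hi, ha j hj] : False)).elim
  have hdne : ∀ i ∈ s, (∏ j ∈ s.erase i, (x i - x j)) ≠ 0 := by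
    intro i hi
    refine Finset.prod_ne_zero_iff.mpr fun j hj => sub_ne_zero_of_ne fun h => ?_
    exact (Finset.mem_erase.mp hj).1 (hxinj (Finset.mem_of_mem_erase hj) hi h.symm)
  set c : ι → ℝ := fun i => (x i) ^ p / ∏ j ∈ s.erase i, (x i - x j) with hcdef
  set g : ℝ → ℝ := fun u => (u ^ 2) ^ p / ∏ i ∈ s, (u ^ 2 + x i) with hgdef
  have hint_i : ∀ i ∈ s,
      IntegrableOn (fun u : ℝ => c i * (u ^ 2 + x i)⁻¹) (Ioi (0:ℝ)) volume :=
    fun i hi => (integrableOn_aux (a i) (ha i hi)).const_mul (c i)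
  have hFg : ∀ u : ℝ, ∑ i ∈ s, c i * (u ^ 2 + x i)⁻¹
      = (-1) ^ (s.card - 1 - p) * g u := by
    intro u
    have := key_identity s x hxpos hxinj p hp u
    simp only [hcdef, hgdef]
    rw [this, mul_div_assoc]
  have hFint : IntegrableOn (fun u : ℝ => ∑ i ∈ s, c i * (u ^ 2 + x i)⁻¹)
      (Ioi (0:ℝ)) volume := integrable_finset_sum s hint_i
  have hsq : ((-1 : ℝ) ^ (s.card - 1 - p)) * ((-1) ^ (s.card - 1 - p)) = 1 := by
    rw [← mul_pow]; norm_num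
  have hgint : IntegrableOn g (Ioi (0:ℝ)) volume := by
    have h2 := hFint.const_mul ((-1 : ℝ) ^ (s.card - 1 - p))
    exact MeasureTheory.IntegrableOn.congr_fun h2
      (fun u _ => by rw [hFg u, ← mul_assoc, hsq, one_mul]) measurableSet_Ioi
  have hIpos : 0 < ∫ u in Ioi (0:ℝ), g u := by
    rw [setIntegral_pos_iff_support_of_nonneg_ae
      (Filter.Eventually.of_forall (fun u => div_nonneg (pow_nonneg (sq_nonneg u) p)
        (Finset.prod_nonneg fun i hi => add_nonneg (sq_nonneg u) (hxpos i hi).le))) hgint]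
    have hsub : Ioi (0:ℝ) ⊆ Function.support g ∩ Ioi 0 := by
      intro u hu
      have hu' : 0 < u := hu
      refine ⟨(div_pos (pow_pos (pow_pos hu' 2) p)
        (Finset.prod_pos fun i hi => by have := hxpos i hi; positivity)).ne', hu⟩
    calc (0 : ENNReal) < volume (Ioi (0:ℝ)) := by simp [Real.volume_Ioi]
      _ ≤ volume (Function.support g ∩ Ioi 0) := measure_mono hsub
  have hterm : ∀ i ∈ s, (a i) ^ (2 * p) / (a i * ∏ j ∈ s.erase i, ((a i) ^ 2 - (a j) ^ 2))
      = (2 / π) * (c i * (π / (2 * a i))) := by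
    intro i hi
    have hane : (a i) ≠ 0 := (ha i hi).ne'
    have hd := hdne i hi
    have hpi : (π : ℝ) ≠ 0 := Real.pi_ne_zero
    rw [pow_mul]
    simp only [hcdef, hxdef]
    field_simp
  have key : ∑ i ∈ s, (a i) ^ (2 * p) / (a i * ∏ j ∈ s.erase i, ((a i) ^ 2 - (a j) ^ 2))
      = (2 / π) * ((-1) ^ (s.card - 1 - p) * ∫ u in Ioi (0:ℝ), g u) := by
    rw [Finset.sum_congr rfl hterm, ← Finset.mul_sum]
    congr 1
    have h1 : ∀ i ∈ s, c i * (π / (2 * a i)) = ∫ u in Ioi (0:ℝ), c i * (u ^ 2 + x i)⁻¹ := by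
      intro i hi
      rw [MeasureTheory.integral_const_mul, integral_aux (a i) (ha i hi)]
    rw [Finset.sum_congr rfl h1, ← MeasureTheory.integral_finset_sum s hint_i]
    rw [← MeasureTheory.integral_const_mul]
    exact MeasureTheory.integral_congr_ae (Filter.Eventually.of_forall (fun u => hFg u))
  rw [key]
  have : ((-1:ℝ) ^ (s.card - 1 - p)) * ((2 / π) * ((-1) ^ (s.card - 1 - p) *
      ∫ u in Ioi (0:ℝ), g u)) = (2 / π) * ∫ u in Ioi (0:ℝ), g u := by
    linear_combination ((2 / π) * ∫ u in Ioi (0:ℝ), g u) * hsq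
  rw [this]
  exact mul_pos (by positivity) hIpos
end Aux

/-- Corollary: positivity of the Laurent coefficients: for pairwise
distinct positive weights with gcd 1, both
`γ₀ = Σ_i a_i^{2n-3}/∏_{j≠i}(a_i² - a_j²)` and
`γ₂ = -(1/12) Σ_i (a_i^{2n-5}/∏_{j≠i}(a_i²-a_j²)) Σ_{j≠i} a_j²
      + (1/12) Σ_j Σ_{i≠j} a_i^{2n-5}(g_j²-1)/∏_{k≠i,j}(a_i²-a_k²)`
are strictly positive rational numbers (the power `a_i^{2n-5}` is a `zpow` in `ℚ`). -/
theorem gamma0_gamma2_positive (n : ℕ) (hn : 2 ≤ n) (a : Fin n → ℕ)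
    (hpos : ∀ i, 0 < a i) (hdist : Function.Injective a)
    (hgcd : Finset.univ.gcd a = 1) :
    (0 < -(1 / 12 : ℚ) * (∑ i,
          ((a i : ℚ) ^ (2 * (n : ℤ) - 5) /
              ∏ j ∈ Finset.univ.erase i, ((a i : ℚ) ^ 2 - (a j : ℚ) ^ 2)) *
            ∑ j ∈ Finset.univ.erase i, (a j : ℚ) ^ 2)
      + (1 / 12 : ℚ) * ∑ j, ∑ i ∈ Finset.univ.erase j,
          (a i : ℚ) ^ (2 * (n : ℤ) - 5) *
            ((((Finset.univ.erase j).gcd a : ℕ) : ℚ) ^ 2 - 1) /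
            ∏ k ∈ (Finset.univ.erase j).erase i,
              ((a i : ℚ) ^ 2 - (a k : ℚ) ^ 2))
    ∧
    (0 < ∑ i, (a i : ℚ) ^ (2 * n - 3) /
        ∏ j ∈ Finset.univ.erase i, ((a i : ℚ) ^ 2 - (a j : ℚ) ^ 2)) := by
  obtain ⟨m, rfl⟩ : ∃ m, n = m + 2 := ⟨n - 2, by omega⟩
  clear hn hgcd
  have haR : ∀ i ∈ (univ : Finset (Fin (m+2))), 0 < (a i : ℝ) := fun i _ => by
    exact_mod_cast hpos i
  have haRinj : Set.InjOn (fun i => (a i : ℝ)) (univ : Finset (Fin (m+2))) := by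
    intro i _ j _ h
    have h' : ((a i : ℕ) : ℝ) = ((a j : ℕ) : ℝ) := h
    exact hdist (by exact_mod_cast h')
  have hcu : (univ : Finset (Fin (m+2))).card = m + 2 := by simp
  have hqne : ∀ i : Fin (m+2), (a i : ℚ) ≠ 0 := fun i =>
    Nat.cast_ne_zero.mpr (hpos i).ne'
  -- γ0 (real)
  have hg0R : 0 < ∑ i, (a i : ℝ) ^ (2*(m+2)-3) /
      ∏ j ∈ univ.erase i, ((a i : ℝ)^2 - (a j : ℝ)^2) := by
    have h := key_sign univ (fun i => (a i : ℝ)) haR haRinj (m+1) (by rw [hcu]; omega)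
    rw [hcu] at h
    have h0 : m + 2 - 1 - (m+1) = 0 := by omega
    rw [h0, pow_zero, one_mul] at h
    have hco : ∀ i ∈ (univ : Finset (Fin (m+2))),
        (a i : ℝ)^(2*(m+1)) / ((a i : ℝ) * ∏ j ∈ univ.erase i, ((a i : ℝ)^2-(a j : ℝ)^2))
        = (a i : ℝ)^(2*(m+2)-3) / ∏ j ∈ univ.erase i, ((a i : ℝ)^2-(a j : ℝ)^2) := by
      intro i _
      have hane : (a i : ℝ) ≠ 0 := (haR i (mem_univ i)).ne'
      have h1 : 2*(m+1) = (2*(m+2)-3)+1 := by omega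
      rw [h1, pow_succ, mul_comm ((a i : ℝ)^(2*(m+2)-3)) ((a i : ℝ)),
        mul_div_mul_left _ _ hane]
    rwa [Finset.sum_congr rfl hco] at h
  -- γ0 (rational)
  have hg0Q : 0 < ∑ i, (a i : ℚ) ^ (2*(m+2)-3) /
      ∏ j ∈ univ.erase i, ((a i : ℚ)^2 - (a j : ℚ)^2) := by
    rw [← Rat.cast_pos (K := ℝ)]
    convert hg0R using 1
    push_cast
    rfl
    push_cast
    rfl
  refine ⟨?_, hg0Q⟩
  -- the A-sum (negative)
  have hAR : (∑ i, (a i : ℝ)^(2*m) /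
      ((a i : ℝ) * ∏ j ∈ univ.erase i, ((a i : ℝ)^2-(a j : ℝ)^2))) < 0 := by
    have h := key_sign univ (fun i => (a i : ℝ)) haR haRinj m (by rw [hcu]; omega)
    rw [hcu] at h
    have h1 : m + 2 - 1 - m = 1 := by omega
    rw [h1, pow_one] at h
    linarith
  have hAQ : (∑ i, (a i : ℚ)^(2*m) /
      ((a i : ℚ) * ∏ j ∈ univ.erase i, ((a i : ℚ)^2-(a j : ℚ)^2))) < 0 := by
    rw [← Rat.cast_lt_zero (K := ℝ)]
    convert hAR using 1
    push_cast
    rfl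
    push_cast
    rfl
  -- inner sums (positive)
  have hinner : ∀ j : Fin (m+2), 0 < ∑ i ∈ univ.erase j, (a i : ℚ)^(2*m) /
      ((a i : ℚ) * ∏ k ∈ (univ.erase j).erase i, ((a i : ℚ)^2-(a k : ℚ)^2)) := by
    intro j
    have hcard : (univ.erase j).card = m+1 := by
      rw [Finset.card_erase_of_mem (mem_univ j), hcu]
      omega
    have h := key_sign (univ.erase j) (fun i => (a i : ℝ))
      (fun i _ => haR i (mem_univ i))
      (haRinj.mono (Finset.coe_subset.mpr (Finset.subset_univ _)))
      m (by rw [hcard]; omega)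
    rw [hcard] at h
    have h1 : m + 1 - 1 - m = 0 := by omega
    rw [h1, pow_zero, one_mul] at h
    rw [← Rat.cast_pos (K := ℝ)]
    convert h using 1
    push_cast
    rfl
    push_cast
    rfl
  -- zpow rewriting
  have hz : ∀ i : Fin (m+2), (a i : ℚ) ^ (2 * ((m+2 : ℕ) : ℤ) - 5)
      = (a i : ℚ)^(2*m) / (a i : ℚ) := by
    intro i
    have he : 2 * ((m+2 : ℕ) : ℤ) - 5 = ((2*m : ℕ) : ℤ) - 1 := by push_cast; ring
    rw [he, zpow_sub_one₀ (hqne i), zpow_natCast, div_eq_mul_inv]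
  -- positivity of P
  have hP : 0 < ∑ j, (a j : ℚ)^2 :=
    Finset.sum_pos (fun j _ => by have := hpos j; positivity) univ_nonempty
  -- nonvanishing denominators
  have hD : ∀ i : Fin (m+2), (∏ j ∈ univ.erase i, ((a i : ℚ)^2-(a j : ℚ)^2)) ≠ 0 := by
    intro i
    refine Finset.prod_ne_zero_iff.mpr fun j hj => sub_ne_zero_of_ne fun h => ?_
    have h2 : a i = a j := by
      have h3 : (a i)^2 = (a j)^2 := by exact_mod_cast h
      exact Nat.pow_left_injective (by norm_num) h3
    exact (Finset.mem_erase.mp hj).1 (hdist h2.symm)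
  -- split T1
  have hT1 : (∑ i, ((a i : ℚ) ^ (2 * ((m+2 : ℕ) : ℤ) - 5) /
        ∏ j ∈ univ.erase i, ((a i : ℚ)^2 - (a j : ℚ)^2)) *
        ∑ j ∈ univ.erase i, (a j : ℚ)^2)
      = (∑ j, (a j : ℚ)^2) * (∑ i, (a i : ℚ)^(2*m) /
          ((a i : ℚ) * ∏ j ∈ univ.erase i, ((a i : ℚ)^2-(a j : ℚ)^2)))
        - (∑ i, (a i : ℚ)^(2*(m+2)-3) /
            ∏ j ∈ univ.erase i, ((a i : ℚ)^2-(a j : ℚ)^2)) := by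
    rw [Finset.mul_sum, ← Finset.sum_sub_distrib]
    refine Finset.sum_congr rfl fun i _ => ?_
    rw [Finset.sum_erase_eq_sub (mem_univ i), hz i]
    have hppow : (a i : ℚ)^(2*(m+2)-3) = (a i : ℚ)^(2*m)*(a i : ℚ) := by
      rw [show 2*(m+2)-3 = 2*m+1 by omega, pow_succ]
    rw [hppow]
    field_simp [hqne i, hD i]
  -- gcd at least one
  have hg1 : ∀ j : Fin (m+2), (1 : ℚ) ≤ (((univ.erase j).gcd a : ℕ) : ℚ) := by
    intro j
    have hne : (univ.erase j).Nonempty := by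
      rw [← Finset.card_pos, Finset.card_erase_of_mem (mem_univ j), hcu]; omega
    obtain ⟨i, hi⟩ := hne
    have : (univ.erase j).gcd a ≠ 0 := fun h =>
      (hpos i).ne' (Finset.gcd_eq_zero_iff.mp h i hi)
    exact_mod_cast Nat.one_le_iff_ne_zero.mpr this
  -- T2 nonneg
  have hT2 : 0 ≤ ∑ j, ∑ i ∈ univ.erase j,
      (a i : ℚ) ^ (2 * ((m+2 : ℕ) : ℤ) - 5) *
        ((((univ.erase j).gcd a : ℕ) : ℚ) ^ 2 - 1) /
        ∏ k ∈ (univ.erase j).erase i, ((a i : ℚ)^2 - (a k : ℚ)^2) := by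
    refine Finset.sum_nonneg fun j _ => ?_
    have hrw : ∀ i ∈ univ.erase j,
        (a i : ℚ) ^ (2 * ((m+2 : ℕ) : ℤ) - 5) *
          ((((univ.erase j).gcd a : ℕ) : ℚ) ^ 2 - 1) /
          ∏ k ∈ (univ.erase j).erase i, ((a i : ℚ)^2 - (a k : ℚ)^2)
        = ((((univ.erase j).gcd a : ℕ) : ℚ) ^ 2 - 1) *
            ((a i : ℚ)^(2*m) /
              ((a i : ℚ) * ∏ k ∈ (univ.erase j).erase i, ((a i : ℚ)^2-(a k : ℚ)^2))) := by
      intro i _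
      rw [hz i, ← div_div, mul_comm ((a i : ℚ)^(2*m) / (a i : ℚ))
        ((((univ.erase j).gcd a : ℕ) : ℚ) ^ 2 - 1), mul_div_assoc]
    rw [Finset.sum_congr rfl hrw, ← Finset.mul_sum]
    have hgsq : (0:ℚ) ≤ (((univ.erase j).gcd a : ℕ) : ℚ) ^ 2 - 1 := by
      nlinarith [hg1 j]
    exact mul_nonneg hgsq (hinner j).le
  rw [hT1]
  have hPA := mul_neg_of_pos_of_neg hP hAQ
  linarith [hg0Q, hT2, hPA]
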